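/- Let c ∈ ℝ and R > 0 be such that every eigenvalue of A and every eigenvalue of T lies in the open disk { z : |z − c| < R }, let f : ℂ → ℂ be complex differentiable on an open set containing the closed disk { z : |z − c| ≤ R }, and let w ∈ ℝ be such that w is not an eigenvalue of A or of T. Then f(A) b − Q f(T) Qᴴ b = M · err_k(w), where M is the matrix M = −(1/(2πi)) ∮_{|z−c|=R} f(z) · ( det(T − wI) / det(T − zI) ) · (A − wI)(A − zI)⁻¹ dz, the contour integral being taken counterclockwise over the circle of radius R centered at c. -/

import Mathlib

open Matrix MeasureTheory Metric

/-- The Euclidean 2-norm of a complex vector. -/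
noncomputable def norm2 {n : ℕ} (v : Fin n → ℂ) : ℝ :=
  Real.sqrt (∑ i, ‖v i‖ ^ 2)

/-- Apply a scalar function to a Hermitian matrix through its spectral decomposition. -/
noncomputable def matFun {m : ℕ} {B : Matrix (Fin m) (Fin m) ℂ}
    (hB : B.IsHermitian) (f : ℝ → ℂ) : Matrix (Fin m) (Fin m) ℂ :=
  (hB.eigenvectorUnitary : Matrix (Fin m) (Fin m) ℂ) *
    Matrix.diagonal (fun i => f (hB.eigenvalues i)) *
    star (hB.eigenvectorUnitary : Matrix (Fin m) (Fin m) ℂ)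

/-- The Lanczos-FA error for the shifted linear system `(A - z I) x = b`. -/
noncomputable def errK {n k : ℕ} (A : Matrix (Fin n) (Fin n) ℂ) (Q : Matrix (Fin n) (Fin k) ℂ)
    (T : Matrix (Fin k) (Fin k) ℂ) (b : Fin n → ℂ) (z : ℂ) : Fin n → ℂ :=
  (A - z • 1)⁻¹.mulVec b - (Q * (T - z • 1)⁻¹ * Qᴴ).mulVec b

/-- The Lanczos-FA residual for the shifted linear system `(A - z I) x = b`. -/
noncomputable def resK {n k : ℕ} (A : Matrix (Fin n) (Fin n) ℂ) (Q : Matrix (Fin n) (Fin k) ℂ)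
    (T : Matrix (Fin k) (Fin k) ℂ) (b : Fin n → ℂ) (z : ℂ) : Fin n → ℂ :=
  b - ((A - z • 1) * (Q * (T - z • 1)⁻¹ * Qᴴ)).mulVec b

/-! ### Auxiliary lemmas -/

section Aux

open Complex

lemma circleIntegral_finset_sum' {ι : Type*} (s : Finset ι) (F : ι → ℂ → ℂ) (c' : ℂ) (R' : ℝ)
    (h : ∀ i ∈ s, CircleIntegrable (F i) c' R') :
    (∮ z in C(c', R'), ∑ i ∈ s, F i z) = ∑ i ∈ s, ∮ z in C(c', R'), F i z := by
  simp only [circleIntegral]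
  rw [← intervalIntegral.integral_finset_sum]
  · congr 1; ext θ; simp [Finset.mul_sum]
  · intro i hi; exact ((circleIntegrable_iff R').mp (h i hi))

lemma spectral_sub_smul {m : ℕ} {B : Matrix (Fin m) (Fin m) ℂ} (hB : B.IsHermitian) (z : ℂ) :
    B - z • 1 = (hB.eigenvectorUnitary : Matrix (Fin m) (Fin m) ℂ) *
      Matrix.diagonal (fun i => (hB.eigenvalues i : ℂ) - z) *
      star (hB.eigenvectorUnitary : Matrix (Fin m) (Fin m) ℂ) := by
  set U := (hB.eigenvectorUnitary : Matrix (Fin m) (Fin m) ℂ)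
  have hUU : U * star U = 1 := Matrix.mem_unitaryGroup_iff.mp hB.eigenvectorUnitary.2
  have h1 : (z • (1 : Matrix (Fin m) (Fin m) ℂ)) = U * (z • 1) * star U := by
    rw [Matrix.mul_smul, Matrix.mul_one, Matrix.smul_mul, hUU]
  calc B - z • 1 = U * Matrix.diagonal (fun i => (hB.eigenvalues i : ℂ)) * star U
        - U * (z • 1) * star U := by
        rw [← h1]; congr 1; exact hB.spectral_theorem
    _ = _ := by
        rw [← Matrix.sub_mul, ← Matrix.mul_sub]
        congr 2
        rw [← Matrix.diagonal_one, ← Matrix.diagonal_smul, Matrix.diagonal_sub]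
        congr 1; ext i; simp

lemma det_sub_smul {m : ℕ} {B : Matrix (Fin m) (Fin m) ℂ} (hB : B.IsHermitian) (z : ℂ) :
    (B - z • 1).det = ∏ i, ((hB.eigenvalues i : ℂ) - z) := by
  set U := (hB.eigenvectorUnitary : Matrix (Fin m) (Fin m) ℂ)
  have hUU : U * star U = 1 := Matrix.mem_unitaryGroup_iff.mp hB.eigenvectorUnitary.2
  rw [spectral_sub_smul hB z, Matrix.det_mul_right_comm, hUU]
  simp

lemma isUnit_det_sub_smul {m : ℕ} {B : Matrix (Fin m) (Fin m) ℂ} (hB : B.IsHermitian) {z : ℂ}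
    (hz : ∀ i, (hB.eigenvalues i : ℂ) ≠ z) : IsUnit (B - z • 1).det := by
  rw [det_sub_smul hB z, isUnit_iff_ne_zero]
  rw [Finset.prod_ne_zero_iff]
  exact fun i _ => sub_ne_zero.mpr (hz i)

lemma inv_sub_smul {m : ℕ} {B : Matrix (Fin m) (Fin m) ℂ} (hB : B.IsHermitian) (z : ℂ)
    (hz : ∀ i, (hB.eigenvalues i : ℂ) ≠ z) :
    (B - z • 1)⁻¹ = (hB.eigenvectorUnitary : Matrix (Fin m) (Fin m) ℂ) *
      Matrix.diagonal (fun i => ((hB.eigenvalues i : ℂ) - z)⁻¹) *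
      star (hB.eigenvectorUnitary : Matrix (Fin m) (Fin m) ℂ) := by
  set U := (hB.eigenvectorUnitary : Matrix (Fin m) (Fin m) ℂ)
  have hUU : U * star U = 1 := Matrix.mem_unitaryGroup_iff.mp hB.eigenvectorUnitary.2
  have hsUU : star U * U = 1 := Matrix.UnitaryGroup.star_mul_self hB.eigenvectorUnitary
  apply Matrix.inv_eq_right_inv
  rw [spectral_sub_smul hB z]
  calc (U * Matrix.diagonal (fun i => (hB.eigenvalues i : ℂ) - z) * star U) *
      (U * Matrix.diagonal (fun i => ((hB.eigenvalues i : ℂ) - z)⁻¹) * star U)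
      = U * (Matrix.diagonal (fun i => (hB.eigenvalues i : ℂ) - z) * (star U * U) *
          Matrix.diagonal (fun i => ((hB.eigenvalues i : ℂ) - z)⁻¹)) * star U := by
        simp only [Matrix.mul_assoc]
    _ = 1 := by
        rw [hsUU, Matrix.mul_one, Matrix.diagonal_mul_diagonal]
        have : (fun i => ((hB.eigenvalues i : ℂ) - z) * ((hB.eigenvalues i : ℂ) - z)⁻¹)
            = fun _ => 1 := by
          ext i; exact mul_inv_cancel₀ (sub_ne_zero.mpr (hz i))
        rw [this, Matrix.diagonal_one, Matrix.mul_one, hUU]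

lemma WDW_mulVec {m n : ℕ} (W : Matrix (Fin n) (Fin m) ℂ) (d : Fin m → ℂ) (v : Fin n → ℂ)
    (i : Fin n) :
    (W * Matrix.diagonal d * Wᴴ).mulVec v i = ∑ j, d j * (W i j * (Wᴴ.mulVec v) j) := by
  simp only [Matrix.mulVec, dotProduct, Matrix.mul_apply, Matrix.diagonal_apply,
    Matrix.conjTranspose_apply]
  simp only [Finset.sum_mul, Finset.mul_sum, Finset.sum_ite_eq, Finset.mem_univ, if_true,
    ite_mul, zero_mul]
  rw [Finset.sum_comm]
  congr 1; ext j
  congr 1; ext l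
  simp only [mul_ite, ite_mul, mul_zero, zero_mul, Finset.sum_ite_eq', Finset.mem_univ, if_true]
  ring

lemma sphere_ball_ne' {c R : ℝ} {a z : ℂ} (ha : a ∈ ball (c : ℂ) R) (hz : z ∈ sphere (c : ℂ) R) :
    a - z ≠ 0 := by
  intro h
  rw [sub_eq_zero] at h; subst h
  rw [mem_ball] at ha; rw [mem_sphere] at hz; rw [hz] at ha; exact lt_irrefl _ ha

lemma ofReal_mem_ball' {c R x : ℝ} (h : |x - c| < R) : (x : ℂ) ∈ ball (c : ℂ) R := by
  rw [mem_ball, Complex.dist_eq, ← Complex.ofReal_sub, Complex.norm_real, Real.norm_eq_abs]; exact h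

lemma f_contOn {c R : ℝ} {f : ℂ → ℂ} (hf : ∃ U : Set ℂ, IsOpen U ∧
    Metric.closedBall (c : ℂ) R ⊆ U ∧ DifferentiableOn ℂ f U) :
    ContinuousOn f (sphere (c : ℂ) R) := by
  obtain ⟨U, hUo, hUb, hUd⟩ := hf
  exact hUd.continuousOn.mono (le_trans sphere_subset_closedBall hUb)

lemma cauchy_helper' {c R : ℝ} {f : ℂ → ℂ} (hf : ∃ U : Set ℂ, IsOpen U ∧
    Metric.closedBall (c : ℂ) R ⊆ U ∧ DifferentiableOn ℂ f U)
    {a : ℂ} (ha : a ∈ ball (c : ℂ) R) :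
    (∮ z in C((c : ℂ), R), f z * (a - z)⁻¹) = -(2 * Real.pi * Complex.I) * f a := by
  obtain ⟨U, hUo, hUb, hUd⟩ := hf
  have hd : DiffContOnCl ℂ f (ball (c : ℂ) R) :=
    DifferentiableOn.diffContOnCl (hUd.mono ((closure_ball_subset_closedBall).trans hUb))
  have h := hd.circleIntegral_sub_inv_smul ha
  have heq : (fun z => f z * (a - z)⁻¹) = fun z => -((z - a)⁻¹ • f z) := by
    ext z; rw [smul_eq_mul, ← neg_mul, ← inv_neg, neg_sub, mul_comm]
  rw [heq]
  have : (∮ z in C((c : ℂ), R), -((z - a)⁻¹ • f z)) =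
      -(∮ z in C((c : ℂ), R), (z - a)⁻¹ • f z) := by
    simp only [circleIntegral, smul_neg, intervalIntegral.integral_neg]
  rw [this, h, smul_eq_mul, neg_mul]

lemma key_integral {m n : ℕ} {c R : ℝ} {f : ℂ → ℂ} (hR : 0 < R)
    (hf : ∃ U : Set ℂ, IsOpen U ∧ Metric.closedBall (c : ℂ) R ⊆ U ∧ DifferentiableOn ℂ f U)
    (W : Matrix (Fin n) (Fin m) ℂ) (μ : Fin m → ℝ) (hμ : ∀ j, |μ j - c| < R)
    (v : Fin n → ℂ) (i : Fin n) :
    (W * Matrix.diagonal (fun j => f ((μ j : ℂ))) * Wᴴ).mulVec v i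
      = -(2 * Real.pi * Complex.I)⁻¹ * ∮ z in C((c : ℂ), R),
          f z * ((W * Matrix.diagonal (fun j => ((μ j : ℂ) - z)⁻¹) * Wᴴ).mulVec v i) := by
  have h2pi : (2 * Real.pi * Complex.I) ≠ 0 := by
    simp [Real.pi_ne_zero, Complex.I_ne_zero]
  have hfc := f_contOn hf
  have hcont : ∀ j : Fin m, ContinuousOn
      (fun z => f z * ((μ j : ℂ) - z)⁻¹ * (W i j * (Wᴴ.mulVec v) j)) (sphere (c : ℂ) R) :=
    fun j => (hfc.mul (((continuous_const.sub continuous_id).continuousOn).inv₀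
      (fun z hz => sphere_ball_ne' (ofReal_mem_ball' (hμ j)) hz))).mul continuousOn_const
  have hci : ∀ j ∈ (Finset.univ : Finset (Fin m)), CircleIntegrable
      (fun z => f z * ((μ j : ℂ) - z)⁻¹ * (W i j * (Wᴴ.mulVec v) j)) (c : ℂ) R :=
    fun j _ => (hcont j).circleIntegrable hR.le
  have step1 : (fun z => f z *
      ((W * Matrix.diagonal (fun j => ((μ j : ℂ) - z)⁻¹) * Wᴴ).mulVec v i)) =
      fun z => ∑ j, f z * ((μ j : ℂ) - z)⁻¹ * (W i j * (Wᴴ.mulVec v) j) := by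
    ext z
    rw [WDW_mulVec, Finset.mul_sum]
    exact Finset.sum_congr rfl fun j _ => by ring
  rw [WDW_mulVec, step1, circleIntegral_finset_sum' _ _ _ _ hci]
  have step2 : ∀ j : Fin m, (∮ z in C((c : ℂ), R),
      f z * ((μ j : ℂ) - z)⁻¹ * (W i j * (Wᴴ.mulVec v) j)) =
      (-(2 * Real.pi * Complex.I) * f ((μ j : ℂ))) * (W i j * (Wᴴ.mulVec v) j) := by
    intro j
    have := circleIntegral.integral_smul_const (fun z => f z * ((μ j : ℂ) - z)⁻¹)
      (W i j * (Wᴴ.mulVec v) j) (c : ℂ) R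
    simp only [smul_eq_mul] at this
    rw [this, cauchy_helper' hf (ofReal_mem_ball' (hμ j))]
  simp only [step2]
  rw [Finset.mul_sum]
  refine Finset.sum_congr rfl fun j _ => ?_
  field_simp

lemma contOn_WDW {m n : ℕ} {c R : ℝ} (W : Matrix (Fin n) (Fin m) ℂ) (μ : Fin m → ℝ)
    (hμ : ∀ j, |μ j - c| < R) (v : Fin n → ℂ) (i : Fin n) :
    ContinuousOn (fun z =>
      (W * Matrix.diagonal (fun j => ((μ j : ℂ) - z)⁻¹) * Wᴴ).mulVec v i) (sphere (c : ℂ) R) := by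
  have heq : (fun z =>
      (W * Matrix.diagonal (fun j => ((μ j : ℂ) - z)⁻¹) * Wᴴ).mulVec v i) =
      fun z => ∑ j, ((μ j : ℂ) - z)⁻¹ * (W i j * (Wᴴ.mulVec v) j) := by
    ext z; rw [WDW_mulVec]
  rw [heq]
  apply continuousOn_finset_sum
  intro j _
  exact (((continuous_const.sub continuous_id).continuousOn).inv₀
    (fun z hz => sphere_ball_ne' (ofReal_mem_ball' (hμ j)) hz)).mul continuousOn_const

lemma adj_const {k' : ℕ} (T : Matrix (Fin (k' + 1)) (Fin (k' + 1)) ℝ)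
    (hTtri : ∀ i j : Fin (k' + 1), (i : ℕ) + 1 < (j : ℕ) ∨ (j : ℕ) + 1 < (i : ℕ) → T i j = 0)
    (z : ℂ) :
    Matrix.adjugate (T.map Complex.ofReal - z • 1) (Fin.last k') 0 =
      (-1 : ℂ) ^ k' * ∏ i : Fin k', (T i.succ i.castSucc : ℂ) := by
  set M := (T.map Complex.ofReal - z • (1 : Matrix (Fin (k' + 1)) (Fin (k' + 1)) ℂ)).updateRow 0
    (Pi.single (Fin.last k') 1) with hM
  rw [Matrix.adjugate_apply, ← hM, Matrix.det_succ_row_zero]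
  rw [Finset.sum_eq_single (Fin.last k')]
  · have h0 : M 0 (Fin.last k') = 1 := by
      rw [hM, Matrix.updateRow_self, Pi.single_eq_same]
    rw [h0, mul_one]
    have hsub : (M.submatrix Fin.succ (Fin.last k').succAbove).det =
        ∏ i : Fin k', (T i.succ i.castSucc : ℂ) := by
      have hentry : ∀ i j : Fin k', M.submatrix Fin.succ (Fin.last k').succAbove i j =
          (T i.succ j.castSucc : ℂ) - z * (if (i.succ : Fin (k'+1)) = j.castSucc then 1 else 0) := by
        intro i j
        rw [Matrix.submatrix_apply, Fin.succAbove_last, hM,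
          Matrix.updateRow_ne (Fin.succ_ne_zero i)]
        simp [Matrix.one_apply]
      rw [Matrix.det_of_upperTriangular]
      · refine Finset.prod_congr rfl fun i _ => ?_
        rw [hentry]
        have : ¬ ((i.succ : Fin (k'+1)) = i.castSucc) := by
          intro h
          have := congrArg (fun x : Fin (k'+1) => (x : ℕ)) h
          simp at this
        rw [if_neg this, mul_zero, sub_zero]
      · intro i j hij
        have hij' : (j : ℕ) < (i : ℕ) := hij
        rw [hentry]
        have h1 : T i.succ j.castSucc = 0 := by
          apply hTtri
          right
          simp only [Fin.coe_castSucc, Fin.val_succ]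
          omega
        have h2 : ¬ ((i.succ : Fin (k'+1)) = j.castSucc) := by
          intro h
          have := congrArg (fun x : Fin (k'+1) => (x : ℕ)) h
          simp only [Fin.val_succ, Fin.coe_castSucc] at this
          omega
        rw [h1, if_neg h2]
        simp
    rw [hsub, Fin.val_last]
  · intro j _ hj
    have : M 0 j = 0 := by
      rw [hM, Matrix.updateRow_self, Pi.single_eq_of_ne hj]
    rw [this, mul_zero, zero_mul]
  · intro h
    exact absurd (Finset.mem_univ _) h

lemma vecMulVec_mul_mulVec {n k m : ℕ} (u : Fin n → ℂ) (v : Fin k → ℂ)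
    (M : Matrix (Fin k) (Fin m) ℂ) (b : Fin m → ℂ) :
    (Matrix.vecMulVec u v * M).mulVec b = (v ⬝ᵥ M.mulVec b) • u := by
  funext i
  simp only [Matrix.mulVec, dotProduct, Matrix.mul_apply, Matrix.vecMulVec_apply,
    Pi.smul_apply, smul_eq_mul, Finset.sum_mul, Finset.mul_sum]
  rw [Finset.sum_comm]
  congr 1; ext l
  congr 1; ext j
  ring

lemma err_structure {n k' : ℕ} (A : Matrix (Fin n) (Fin n) ℂ)
    (Q : Matrix (Fin n) (Fin (k' + 1)) ℂ) (Tc : Matrix (Fin (k' + 1)) (Fin (k' + 1)) ℂ)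
    (b q : Fin n → ℂ) (nb βc : ℂ)
    (hQ : Qᴴ * Q = 1) (hb : b = nb • Q.mulVec (Pi.single 0 1))
    (hAQ' : ∀ z : ℂ, (A - z • 1) * Q =
      Q * (Tc - z • 1) + βc • Matrix.vecMulVec q (Pi.single (Fin.last k') 1))
    (z : ℂ) (hAz : IsUnit (A - z • 1).det) (hTz : IsUnit (Tc - z • 1).det) :
    (A - z • 1)⁻¹.mulVec b - (Q * (Tc - z • 1)⁻¹ * Qᴴ).mulVec b
      = (-(βc * nb * ((Tc - z • 1)⁻¹ (Fin.last k') 0))) • (A - z • 1)⁻¹.mulVec q := by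
  set Az := A - z • (1 : Matrix (Fin n) (Fin n) ℂ)
  set Tz := Tc - z • (1 : Matrix (Fin (k' + 1)) (Fin (k' + 1)) ℂ)
  set P := Matrix.vecMulVec q (Pi.single (Fin.last k') (1 : ℂ))
  have hQHb : Qᴴ.mulVec b = nb • (Pi.single 0 1 : Fin (k' + 1) → ℂ) := by
    rw [hb, Matrix.mulVec_smul, Matrix.mulVec_mulVec, hQ, Matrix.one_mulVec]
  have key : Az * (Q * Tz⁻¹ * Qᴴ) = Q * Qᴴ + βc • (P * Tz⁻¹ * Qᴴ) := by
    calc Az * (Q * Tz⁻¹ * Qᴴ) = ((Az * Q) * Tz⁻¹) * Qᴴ := by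
          simp only [Matrix.mul_assoc]
      _ = ((Q * Tz + βc • P) * Tz⁻¹) * Qᴴ := by rw [hAQ' z]
      _ = _ := by
          rw [Matrix.add_mul, Matrix.add_mul, Matrix.mul_assoc Q Tz Tz⁻¹,
            Matrix.mul_nonsing_inv _ hTz, Matrix.mul_one, Matrix.smul_mul, Matrix.smul_mul]
  have hQQb : (Q * Qᴴ).mulVec b = b := by
    rw [← Matrix.mulVec_mulVec, hQHb, Matrix.mulVec_smul, ← hb]
  have hsingle : (Tz⁻¹ * Qᴴ).mulVec b (Fin.last k') = nb * Tz⁻¹ (Fin.last k') 0 := by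
    rw [← Matrix.mulVec_mulVec, hQHb, Matrix.mulVec_smul]
    simp [Matrix.mulVec_single, mul_comm]
  have hres : b - (Az * (Q * Tz⁻¹ * Qᴴ)).mulVec b = (-(βc * nb * Tz⁻¹ (Fin.last k') 0)) • q := by
    rw [key, Matrix.add_mulVec, hQQb, Matrix.smul_mulVec, Matrix.mul_assoc,
      vecMulVec_mul_mulVec]
    rw [single_dotProduct, one_mul, hsingle]
    rw [sub_add_eq_sub_sub, sub_self, zero_sub, smul_smul, ← neg_smul, mul_assoc]
  calc Az⁻¹.mulVec b - (Q * Tz⁻¹ * Qᴴ).mulVec b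
      = Az⁻¹.mulVec (b - (Az * (Q * Tz⁻¹ * Qᴴ)).mulVec b) := by
        rw [Matrix.mulVec_sub, Matrix.mulVec_mulVec, ← Matrix.mul_assoc,
          Matrix.nonsing_inv_mul _ hAz, Matrix.one_mul]
    _ = _ := by rw [hres, Matrix.mulVec_smul]

lemma contOn_mul_WDW {m n : ℕ} {c R : ℝ} (B : Matrix (Fin n) (Fin n) ℂ)
    (W : Matrix (Fin n) (Fin m) ℂ) (μ : Fin m → ℝ) (hμ : ∀ j, |μ j - c| < R)
    (v : Fin n → ℂ) (i : Fin n) :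
    ContinuousOn (fun z =>
      (B * (W * Matrix.diagonal (fun j => ((μ j : ℂ) - z)⁻¹) * Wᴴ)).mulVec v i)
      (sphere (c : ℂ) R) := by
  have heq : (fun z =>
      (B * (W * Matrix.diagonal (fun j => ((μ j : ℂ) - z)⁻¹) * Wᴴ)).mulVec v i)
      = fun z => ∑ l, B i l *
        ((W * Matrix.diagonal (fun j => ((μ j : ℂ) - z)⁻¹) * Wᴴ).mulVec v l) := by
    ext z
    rw [← Matrix.mulVec_mulVec]
    simp [Matrix.mulVec, dotProduct]
  rw [heq]
  exact continuousOn_finset_sum _ fun l _ => continuousOn_const.mul (contOn_WDW W μ hμ v l)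

end Aux

theorem lanczos_fa_error_integral_representation
    {n k : ℕ} (hn : 0 < n) (hk : 0 < k)
    (A : Matrix (Fin n) (Fin n) ℂ) (hA : A.IsHermitian)
    (b : Fin n → ℂ) (hb : b ≠ 0)
    (Q : Matrix (Fin n) (Fin k) ℂ) (hQ : Qᴴ * Q = 1)
    (hQb : Q.mulVec (Pi.single (⟨0, hk⟩ : Fin k) 1) = (norm2 b)⁻¹ • b)
    (T : Matrix (Fin k) (Fin k) ℝ) (hTsymm : T.IsSymm)
    (hTtri : ∀ i j : Fin k, (i : ℕ) + 1 < (j : ℕ) ∨ (j : ℕ) + 1 < (i : ℕ) → T i j = 0)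
    (hToff : ∀ i j : Fin k, (i : ℕ) + 1 = (j : ℕ) → 0 < T i j)
    (βk : ℝ) (hβk : 0 < βk)
    (q : Fin n → ℂ) (hq : norm2 q = 1) (hQq : Qᴴ.mulVec q = 0)
    (hAQ : A * Q = Q * T.map Complex.ofReal + (βk : ℂ) •
      Matrix.vecMulVec q (Pi.single (⟨k - 1, Nat.sub_lt hk Nat.one_pos⟩ : Fin k) 1))
    (hTH : (T.map Complex.ofReal).IsHermitian)
    (c R : ℝ) (hR : 0 < R)
    (hspecA : ∀ i, |hA.eigenvalues i - c| < R)
    (hspecT : ∀ i, |hTH.eigenvalues i - c| < R)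
    (f : ℂ → ℂ)
    (hf : ∃ U : Set ℂ, IsOpen U ∧ Metric.closedBall (c : ℂ) R ⊆ U ∧ DifferentiableOn ℂ f U)
    (w : ℝ) (hwA : ∀ i, hA.eigenvalues i ≠ w) (hwT : ∀ i, hTH.eigenvalues i ≠ w) :
    (matFun hA fun x : ℝ => f (x : ℂ)).mulVec b -
        (Q * matFun hTH (fun x : ℝ => f (x : ℂ)) * Qᴴ).mulVec b =
      (Matrix.of fun i j : Fin n =>
          (-(2 * Real.pi * Complex.I)⁻¹) *
            ∮ z in C((c : ℂ), R),
              f z * ((T.map Complex.ofReal - (w : ℂ) • 1).det /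
                  (T.map Complex.ofReal - z • 1).det) *
                (((A - (w : ℂ) • 1) * (A - z • 1)⁻¹) i j)).mulVec
        (errK A Q (T.map Complex.ofReal) b (w : ℂ)) := by
  obtain ⟨k', rfl⟩ : ∃ k', k = k' + 1 := ⟨k - 1, (Nat.succ_pred_eq_of_pos hk).symm⟩
  set Tc := T.map Complex.ofReal with hTcdef
  set μA := hA.eigenvalues with hμA
  set μT := hTH.eigenvalues with hμT
  set U := (hA.eigenvectorUnitary : Matrix (Fin n) (Fin n) ℂ) with hU
  set V := (hTH.eigenvectorUnitary : Matrix (Fin (k' + 1)) (Fin (k' + 1)) ℂ) with hV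
  have hidx0 : (⟨0, hk⟩ : Fin (k' + 1)) = 0 := by ext; simp
  have hidxl : (⟨k' + 1 - 1, Nat.sub_lt hk Nat.one_pos⟩ : Fin (k' + 1)) = Fin.last k' := by
    ext; simp
  rw [hidx0] at hQb
  rw [hidxl] at hAQ
  -- scalars
  have hnb0 : (0 : ℝ) < norm2 b := by
    obtain ⟨i, hi⟩ := Function.ne_iff.mp hb
    apply Real.sqrt_pos.mpr
    refine Finset.sum_pos' (fun j _ => sq_nonneg _) ⟨i, Finset.mem_univ i, pow_pos (norm_pos_iff.mpr hi) 2⟩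
  set nb : ℂ := ((norm2 b : ℝ) : ℂ) with hnbdef
  have hnb : nb ≠ 0 := Complex.ofReal_ne_zero.mpr hnb0.ne'
  have hbv : b = nb • Q.mulVec (Pi.single 0 1) := by
    rw [hQb]
    have : ((norm2 b)⁻¹ : ℝ) • b = (nb⁻¹ : ℂ) • b := by
      funext i
      simp [hnbdef, Complex.real_smul]
    rw [this, smul_smul, mul_inv_cancel₀ hnb, one_smul]
  have hAQ' : ∀ z : ℂ, (A - z • 1) * Q = Q * (Tc - z • 1) +
      (βk : ℂ) • Matrix.vecMulVec q (Pi.single (Fin.last k') 1) := by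
    intro z
    rw [Matrix.sub_mul, hAQ, Matrix.mul_sub, Matrix.smul_mul, Matrix.one_mul,
      Matrix.mul_smul, Matrix.mul_one]
    abel
  -- eigenvalue avoidance
  have hzA : ∀ z ∈ sphere (c : ℂ) R, ∀ i, ((μA i : ℝ) : ℂ) ≠ z := fun z hz i =>
    sub_ne_zero.mp (sphere_ball_ne' (ofReal_mem_ball' (hspecA i)) hz)
  have hzT : ∀ z ∈ sphere (c : ℂ) R, ∀ i, ((μT i : ℝ) : ℂ) ≠ z := fun z hz i =>
    sub_ne_zero.mp (sphere_ball_ne' (ofReal_mem_ball' (hspecT i)) hz)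
  have hwA' : ∀ i, ((μA i : ℝ) : ℂ) ≠ ((w : ℝ) : ℂ) := fun i h =>
    hwA i (by exact_mod_cast h)
  have hwT' : ∀ i, ((μT i : ℝ) : ℂ) ≠ ((w : ℝ) : ℂ) := fun i h =>
    hwT i (by exact_mod_cast h)
  have hTwu : IsUnit (Tc - (w : ℂ) • 1).det := isUnit_det_sub_smul hTH hwT'
  have hAwu : IsUnit (A - (w : ℂ) • 1).det := isUnit_det_sub_smul hA hwA'
  -- adjugate constant
  set adjC : ℂ := (-1 : ℂ) ^ k' * ∏ i : Fin k', (T i.succ i.castSucc : ℂ) with hadjC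
  have hs : ∀ z : ℂ, (Tc - z • 1)⁻¹ (Fin.last k') 0 = ((Tc - z • 1).det)⁻¹ * adjC := by
    intro z
    rw [Matrix.inv_def, Matrix.smul_apply, Ring.inverse_eq_inv, smul_eq_mul, hTcdef,
      adj_const T hTtri z]
  -- error structure
  have herr : ∀ z : ℂ, (∀ i, ((μA i : ℝ) : ℂ) ≠ z) → (∀ i, ((μT i : ℝ) : ℂ) ≠ z) →
      (A - z • 1)⁻¹.mulVec b - (Q * (Tc - z • 1)⁻¹ * Qᴴ).mulVec b
        = (-((βk : ℂ) * nb * (((Tc - z • 1).det)⁻¹ * adjC))) • (A - z • 1)⁻¹.mulVec q := by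
    intro z h1 h2
    have := err_structure A Q Tc b q nb (βk : ℂ) hQ hbv hAQ' z
      (isUnit_det_sub_smul hA h1) (isUnit_det_sub_smul hTH h2)
    rwa [hs z] at this
  have hdetTz : ∀ z : ℂ, (∀ i, ((μT i : ℝ) : ℂ) ≠ z) → (Tc - z • 1).det ≠ 0 := by
    intro z h2
    exact (isUnit_det_sub_smul hTH h2).ne_zero
  -- commutation
  have hcomm : ∀ z : ℂ, (∀ i, ((μA i : ℝ) : ℂ) ≠ z) →
      (A - (w : ℂ) • 1) * (A - z • 1)⁻¹ * (A - (w : ℂ) • 1)⁻¹ = (A - z • 1)⁻¹ := by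
    intro z h1
    have hAz := isUnit_det_sub_smul hA h1
    set Az := A - z • (1 : Matrix (Fin n) (Fin n) ℂ)
    set Aw := A - (w : ℂ) • (1 : Matrix (Fin n) (Fin n) ℂ)
    have comm : Aw * Az = Az * Aw := by
      show (A - (w:ℂ) • 1) * (A - z • 1) = (A - z • 1) * (A - (w:ℂ) • 1)
      simp only [Matrix.sub_mul, Matrix.mul_sub, Matrix.smul_mul, Matrix.mul_smul,
        Matrix.one_mul, Matrix.mul_one, smul_sub, smul_smul, mul_comm]
      abel
    have h2 : Aw * Az⁻¹ = Az⁻¹ * Aw := by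
      calc Aw * Az⁻¹ = Az⁻¹ * Az * (Aw * Az⁻¹) := by
            rw [Matrix.nonsing_inv_mul _ hAz, Matrix.one_mul]
        _ = Az⁻¹ * ((Az * Aw) * Az⁻¹) := by simp only [Matrix.mul_assoc]
        _ = Az⁻¹ * ((Aw * Az) * Az⁻¹) := by rw [← comm]
        _ = Az⁻¹ * (Aw * (Az * Az⁻¹)) := by simp only [Matrix.mul_assoc]
        _ = Az⁻¹ * Aw := by rw [Matrix.mul_nonsing_inv _ hAz, Matrix.mul_one]
    rw [h2, Matrix.mul_assoc, Matrix.mul_nonsing_inv _ hAwu, Matrix.mul_one]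
  -- the propagation identity
  have hprop : ∀ z ∈ sphere (c : ℂ) R,
      ((Tc - (w : ℂ) • 1).det / (Tc - z • 1).det) •
        ((A - (w : ℂ) • 1) * (A - z • 1)⁻¹).mulVec (errK A Q Tc b (w : ℂ))
      = (A - z • 1)⁻¹.mulVec b - (Q * (Tc - z • 1)⁻¹ * Qᴴ).mulVec b := by
    intro z hz
    have ew : errK A Q Tc b (w : ℂ)
        = (-((βk : ℂ) * nb * (((Tc - (w : ℂ) • 1).det)⁻¹ * adjC))) •
          (A - (w : ℂ) • 1)⁻¹.mulVec q := by
      simpa only [errK] using herr (w : ℂ) hwA' hwT'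
    rw [herr z (hzA z hz) (hzT z hz), ew, Matrix.mulVec_smul, Matrix.mulVec_mulVec,
      hcomm z (hzA z hz), smul_smul]
    congr 1
    have h1 : (Tc - (w : ℂ) • 1).det ≠ 0 := hTwu.ne_zero
    calc ((Tc - (w : ℂ) • 1).det / (Tc - z • 1).det) *
          (-((βk : ℂ) * nb * (((Tc - (w : ℂ) • 1).det)⁻¹ * adjC)))
        = ((Tc - (w : ℂ) • 1).det * ((Tc - (w : ℂ) • 1).det)⁻¹) *
          -((βk : ℂ) * nb * (((Tc - z • 1).det)⁻¹ * adjC)) := by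
          rw [div_eq_mul_inv]; ring
      _ = -((βk : ℂ) * nb * (((Tc - z • 1).det)⁻¹ * adjC)) := by
          rw [mul_inv_cancel₀ h1, one_mul]
  -- spectral resolvents
  set RA : ℂ → Matrix (Fin n) (Fin n) ℂ :=
    fun z => U * Matrix.diagonal (fun j => ((μA j : ℂ) - z)⁻¹) * Uᴴ with hRA
  set W : Matrix (Fin n) (Fin (k' + 1)) ℂ := Q * V with hW
  set RT : ℂ → Matrix (Fin n) (Fin n) ℂ :=
    fun z => W * Matrix.diagonal (fun j => ((μT j : ℂ) - z)⁻¹) * Wᴴ with hRT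
  have hRAeq : ∀ z ∈ sphere (c : ℂ) R, (A - z • 1)⁻¹ = RA z := by
    intro z hz
    rw [inv_sub_smul hA z (hzA z hz), Matrix.star_eq_conjTranspose, hRA]
  have hRTeq : ∀ z ∈ sphere (c : ℂ) R, Q * (Tc - z • 1)⁻¹ * Qᴴ = RT z := by
    intro z hz
    rw [inv_sub_smul hTH z (hzT z hz), Matrix.star_eq_conjTranspose, hRT, hW]
    simp only [Matrix.conjTranspose_mul, Matrix.mul_assoc]
    rfl
  have hfc := f_contOn hf
  funext i
  -- integrability of LHS pieces
  have hint1 : CircleIntegrable (fun z => f z * (RA z).mulVec b i) (c : ℂ) R :=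
    (hfc.mul (contOn_WDW U μA hspecA b i)).circleIntegrable hR.le
  have hint2 : CircleIntegrable (fun z => f z * (RT z).mulVec b i) (c : ℂ) R :=
    (hfc.mul (contOn_WDW W μT hspecT b i)).circleIntegrable hR.le
  -- LHS computation
  have hmfA : matFun hA (fun x : ℝ => f (x : ℂ)) =
      U * Matrix.diagonal (fun j => f ((μA j : ℂ))) * Uᴴ := by
    simp only [matFun, Matrix.star_eq_conjTranspose, hU, hμA]
  have hmfT : Q * matFun hTH (fun x : ℝ => f (x : ℂ)) * Qᴴ =
      W * Matrix.diagonal (fun j => f ((μT j : ℂ))) * Wᴴ := by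
    simp only [matFun, Matrix.star_eq_conjTranspose, hV, hμT, hW,
      Matrix.conjTranspose_mul, Matrix.mul_assoc]
  have hL : ((matFun hA fun x : ℝ => f (x : ℂ)).mulVec b -
      (Q * matFun hTH (fun x : ℝ => f (x : ℂ)) * Qᴴ).mulVec b) i
      = -(2 * Real.pi * Complex.I)⁻¹ *
        ∮ z in C((c : ℂ), R), f z * ((RA z).mulVec b i - (RT z).mulVec b i) := by
    rw [Pi.sub_apply, hmfA, hmfT, key_integral hR hf U μA hspecA b i,
      key_integral hR hf W μT hspecT b i, ← mul_sub,
      ← circleIntegral.integral_sub hint1 hint2]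
    congr 1
    apply circleIntegral.integral_congr hR.le
    intro z hz
    simp only [mul_sub]
  rw [hL]
  symm
  -- RHS computation
  have hcdet : ContinuousOn (fun z : ℂ => (Tc - (w : ℂ) • 1).det / (Tc - z • 1).det)
      (sphere (c : ℂ) R) := by
    have hdfun : (fun z : ℂ => (Tc - z • 1).det) = fun z => ∏ j, ((μT j : ℂ) - z) :=
      funext fun z => det_sub_smul hTH z
    apply ContinuousOn.div continuousOn_const
    · rw [hdfun]
      exact (continuous_finset_prod _ fun j _ =>
        continuous_const.sub continuous_id).continuousOn
    · intro z hz
      exact hdetTz z (hzT z hz)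
  have hcent : ∀ j : Fin n, ContinuousOn
      (fun z => ((A - (w : ℂ) • 1) * RA z) i j) (sphere (c : ℂ) R) := by
    intro j
    have hent : (fun z => ((A - (w : ℂ) • 1) * RA z) i j)
        = fun z => ((A - (w : ℂ) • 1) * RA z).mulVec (Pi.single j 1) i := by
      funext z
      rw [Matrix.mulVec_single_one]
      rfl
    rw [hent]
    exact contOn_mul_WDW (A - (w : ℂ) • 1) U μA hspecA (Pi.single j 1) i
  have hHint : ∀ j ∈ (Finset.univ : Finset (Fin n)), CircleIntegrable
      (fun z => f z * ((Tc - (w : ℂ) • 1).det / (Tc - z • 1).det) *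
        (((A - (w : ℂ) • 1) * RA z) i j) * errK A Q Tc b (w : ℂ) j) (c : ℂ) R :=
    fun j _ => ((((hfc.mul hcdet).mul (hcent j)).mul
      continuousOn_const)).circleIntegrable hR.le
  have e1 : ∀ j : Fin n, (∮ z in C((c : ℂ), R),
        f z * ((Tc - (w : ℂ) • 1).det / (Tc - z • 1).det) *
          (((A - (w : ℂ) • 1) * (A - z • 1)⁻¹) i j))
      = ∮ z in C((c : ℂ), R),
        f z * ((Tc - (w : ℂ) • 1).det / (Tc - z • 1).det) *
          (((A - (w : ℂ) • 1) * RA z) i j) := by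
    intro j
    apply circleIntegral.integral_congr hR.le
    intro z hz
    simp only
    rw [hRAeq z hz]
  have e3 : ∀ j : Fin n, (∮ z in C((c : ℂ), R),
        f z * ((Tc - (w : ℂ) • 1).det / (Tc - z • 1).det) *
          (((A - (w : ℂ) • 1) * RA z) i j)) * errK A Q Tc b (w : ℂ) j
      = ∮ z in C((c : ℂ), R),
        f z * ((Tc - (w : ℂ) • 1).det / (Tc - z • 1).det) *
          (((A - (w : ℂ) • 1) * RA z) i j) * errK A Q Tc b (w : ℂ) j := by
    intro j
    have := circleIntegral.integral_smul_const
      (fun z => f z * ((Tc - (w : ℂ) • 1).det / (Tc - z • 1).det) *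
        (((A - (w : ℂ) • 1) * RA z) i j)) (errK A Q Tc b (w : ℂ) j) (c : ℂ) R
    simp only [smul_eq_mul] at this
    rw [this]
  have e5 : Set.EqOn
      (fun z => ∑ j, f z * ((Tc - (w : ℂ) • 1).det / (Tc - z • 1).det) *
        (((A - (w : ℂ) • 1) * RA z) i j) * errK A Q Tc b (w : ℂ) j)
      (fun z => f z * ((RA z).mulVec b i - (RT z).mulVec b i))
      (sphere (c : ℂ) R) := by
    intro z hz
    simp only
    have h5 := hprop z hz
    rw [hRAeq z hz, hRTeq z hz] at h5
    have h6 := congrFun h5 i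
    simp only [Pi.smul_apply, Pi.sub_apply, smul_eq_mul] at h6
    rw [← h6]
    simp only [Matrix.mulVec, dotProduct, Finset.mul_sum]
    exact Finset.sum_congr rfl fun j _ => by ring
  calc (Matrix.of fun i j : Fin n =>
          (-(2 * Real.pi * Complex.I)⁻¹) *
            ∮ z in C((c : ℂ), R),
              f z * ((Tc - (w : ℂ) • 1).det / (Tc - z • 1).det) *
                (((A - (w : ℂ) • 1) * (A - z • 1)⁻¹) i j)).mulVec
        (errK A Q Tc b (w : ℂ)) i
      = ∑ j, (-(2 * Real.pi * Complex.I)⁻¹) * ((∮ z in C((c : ℂ), R),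
          f z * ((Tc - (w : ℂ) • 1).det / (Tc - z • 1).det) *
            (((A - (w : ℂ) • 1) * (A - z • 1)⁻¹) i j)) * errK A Q Tc b (w : ℂ) j) := by
        simp only [Matrix.mulVec, dotProduct, Matrix.of_apply, mul_assoc]
    _ = -(2 * Real.pi * Complex.I)⁻¹ * ∑ j, (∮ z in C((c : ℂ), R),
          f z * ((Tc - (w : ℂ) • 1).det / (Tc - z • 1).det) *
            (((A - (w : ℂ) • 1) * RA z) i j)) * errK A Q Tc b (w : ℂ) j := by
        rw [← Finset.mul_sum]
        congr 1
        exact Finset.sum_congr rfl fun j _ => by rw [e1 j]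
    _ = -(2 * Real.pi * Complex.I)⁻¹ * ∑ j, ∮ z in C((c : ℂ), R),
          f z * ((Tc - (w : ℂ) • 1).det / (Tc - z • 1).det) *
            (((A - (w : ℂ) • 1) * RA z) i j) * errK A Q Tc b (w : ℂ) j := by
        congr 1
        exact Finset.sum_congr rfl fun j _ => e3 j
    _ = -(2 * Real.pi * Complex.I)⁻¹ * ∮ z in C((c : ℂ), R), ∑ j,
          f z * ((Tc - (w : ℂ) • 1).det / (Tc - z • 1).det) *
            (((A - (w : ℂ) • 1) * RA z) i j) * errK A Q Tc b (w : ℂ) j := by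
        rw [circleIntegral_finset_sum' _ _ _ _ hHint]
    _ = -(2 * Real.pi * Complex.I)⁻¹ *
        ∮ z in C((c : ℂ), R), f z * ((RA z).mulVec b i - (RT z).mulVec b i) := by
        rw [circleIntegral.integral_congr hR.le e5]
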